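/- For every x ∈ ℝ³ with x ≠ 0, x ≠ a₁ and x ≠ a₂, one has the strict lower bound K(x)² + H(x)·L(x) > (k₁ − k₂)²·( ‖a₁‖/(‖a₁ − a₂‖·r·r₁) + ‖a₂‖/(‖a₁ − a₂‖·r·r₂) − 1/(r₁·r₂) ) + 3·l₀/r² + ( 3/r + ‖a₁‖/(r·r₁) + ‖a₂‖/(r·r₂) − 1/r₁ − 1/r₂ ). -/
import Mathlib

private lemma blackLens_aux (r r₁ r₂ A₁ A₂ A₁₂ k₁ k₂ l₀ : ℝ)
    (hr : 0 < r) (h1 : 0 < r₁) (h2 : 0 < r₂)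
    (hA1 : 0 < A₁) (hA2 : 0 < A₂) (hA12 : 0 < A₁₂)
    (hf1 : -1 + (3 * k₁ ^ 2 - l₀) / A₁ - (k₁ - k₂) ^ 2 / A₁₂ > 0)
    (hf2 : -1 + (3 * k₂ ^ 2 - l₀) / A₂ - (k₁ - k₂) ^ 2 / A₁₂ > 0) :
    (k₁ / r₁ + k₂ / r₂) ^ 2
      + (3 / r - 1 / r₁ - 1 / r₂) * (1 + l₀ / r + k₁ ^ 2 / r₁ + k₂ ^ 2 / r₂)
    > (k₁ - k₂) ^ 2 * (A₁ / (A₁₂ * r * r₁) + A₂ / (A₁₂ * r * r₂) - 1 / (r₁ * r₂))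
      + 3 * l₀ / r ^ 2
      + (3 / r + A₁ / (r * r₁) + A₂ / (r * r₂) - 1 / r₁ - 1 / r₂) := by
  have hc1 : 0 < 3 * k₁ ^ 2 - l₀ - A₁ - (k₁ - k₂) ^ 2 * A₁ / A₁₂ := by
    have h := mul_pos hf1 hA1
    have e : (-1 + (3 * k₁ ^ 2 - l₀) / A₁ - (k₁ - k₂) ^ 2 / A₁₂) * A₁
        = 3 * k₁ ^ 2 - l₀ - A₁ - (k₁ - k₂) ^ 2 * A₁ / A₁₂ := by
      field_simp; ring
    linarith [e ▸ h]
  have hc2 : 0 < 3 * k₂ ^ 2 - l₀ - A₂ - (k₁ - k₂) ^ 2 * A₂ / A₁₂ := by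
    have h := mul_pos hf2 hA2
    have e : (-1 + (3 * k₂ ^ 2 - l₀) / A₂ - (k₁ - k₂) ^ 2 / A₁₂) * A₂
        = 3 * k₂ ^ 2 - l₀ - A₂ - (k₁ - k₂) ^ 2 * A₂ / A₁₂ := by
      field_simp; ring
    linarith [e ▸ h]
  have key : ((k₁ / r₁ + k₂ / r₂) ^ 2
      + (3 / r - 1 / r₁ - 1 / r₂) * (1 + l₀ / r + k₁ ^ 2 / r₁ + k₂ ^ 2 / r₂))
      - ((k₁ - k₂) ^ 2 * (A₁ / (A₁₂ * r * r₁) + A₂ / (A₁₂ * r * r₂) - 1 / (r₁ * r₂))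
      + 3 * l₀ / r ^ 2
      + (3 / r + A₁ / (r * r₁) + A₂ / (r * r₂) - 1 / r₁ - 1 / r₂))
      = (3 * k₁ ^ 2 - l₀ - A₁ - (k₁ - k₂) ^ 2 * A₁ / A₁₂) / (r * r₁)
      + (3 * k₂ ^ 2 - l₀ - A₂ - (k₁ - k₂) ^ 2 * A₂ / A₁₂) / (r * r₂) := by
    field_simp
    ring
  have hpos : 0 < (3 * k₁ ^ 2 - l₀ - A₁ - (k₁ - k₂) ^ 2 * A₁ / A₁₂) / (r * r₁)
      + (3 * k₂ ^ 2 - l₀ - A₂ - (k₁ - k₂) ^ 2 * A₂ / A₁₂) / (r * r₂) :=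
    add_pos (div_pos hc1 (mul_pos hr h1)) (div_pos hc2 (mul_pos hr h2))
  linarith [key ▸ hpos]

/-- **Lower bound on the invariant `N⁻¹ = K² + H·L` of the three-centred `L(3,1)` black lens.**
Using the fixed-point inequalities at the two centres `a₁, a₂`, for every `x` away from the
three centres one obtains the strict lower bound
`K² + H·L > (k₁−k₂)²(‖a₁‖/(‖a₁−a₂‖ r r₁) + ‖a₂‖/(‖a₁−a₂‖ r r₂) − 1/(r₁ r₂))
  + 3 l₀ / r² + (3/r + ‖a₁‖/(r r₁) + ‖a₂‖/(r r₂) − 1/r₁ − 1/r₂)`. -/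
theorem blackLens_N_lower_bound
    (a₁ a₂ : EuclideanSpace ℝ (Fin 3))
    (ha₁ : a₁ ≠ 0) (ha₂ : a₂ ≠ 0) (ha₁₂ : a₁ ≠ a₂)
    (k₁ k₂ l₀ : ℝ)
    (hfix₁ : -1 + (3 * k₁ ^ 2 - l₀) / ‖a₁‖ - (k₁ - k₂) ^ 2 / ‖a₁ - a₂‖ > 0)
    (hfix₂ : -1 + (3 * k₂ ^ 2 - l₀) / ‖a₂‖ - (k₁ - k₂) ^ 2 / ‖a₁ - a₂‖ > 0) :
    ∀ x : EuclideanSpace ℝ (Fin 3), x ≠ 0 → x ≠ a₁ → x ≠ a₂ →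
      (k₁ / ‖x - a₁‖ + k₂ / ‖x - a₂‖) ^ 2
        + (3 / ‖x‖ - 1 / ‖x - a₁‖ - 1 / ‖x - a₂‖)
          * (1 + l₀ / ‖x‖ + k₁ ^ 2 / ‖x - a₁‖ + k₂ ^ 2 / ‖x - a₂‖)
      > (k₁ - k₂) ^ 2 *
          (‖a₁‖ / (‖a₁ - a₂‖ * ‖x‖ * ‖x - a₁‖)
            + ‖a₂‖ / (‖a₁ - a₂‖ * ‖x‖ * ‖x - a₂‖)
            - 1 / (‖x - a₁‖ * ‖x - a₂‖))
        + 3 * l₀ / ‖x‖ ^ 2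
        + (3 / ‖x‖ + ‖a₁‖ / (‖x‖ * ‖x - a₁‖) + ‖a₂‖ / (‖x‖ * ‖x - a₂‖)
            - 1 / ‖x - a₁‖ - 1 / ‖x - a₂‖) := by
  intro x hx hx1 hx2
  exact blackLens_aux ‖x‖ ‖x - a₁‖ ‖x - a₂‖ ‖a₁‖ ‖a₂‖ ‖a₁ - a₂‖ k₁ k₂ l₀
    (norm_pos_iff.mpr hx)
    (norm_pos_iff.mpr (sub_ne_zero.mpr hx1))
    (norm_pos_iff.mpr (sub_ne_zero.mpr hx2))
    (norm_pos_iff.mpr ha₁) (norm_pos_iff.mpr ha₂)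
    (norm_pos_iff.mpr (sub_ne_zero.mpr ha₁₂))
    hfix₁ hfix₂
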